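/- If G₁ and G₂ are L-cospectral graphs on the same number of vertices, then for any finite simple graph G′, the joins G′ ⊗ G₁ and G′ ⊗ G₂ are L-cospectral. -/

import Mathlib

attribute [local instance] Classical.propDecidable

/-- The join of two simple graphs. -/
def graphJoin {α β : Type} (G : SimpleGraph α) (H : SimpleGraph β) : SimpleGraph (α ⊕ β) where
  Adj x y := match x, y with
    | Sum.inl a, Sum.inl b => G.Adj a b
    | Sum.inr a, Sum.inr b => H.Adj a b
    | Sum.inl _, Sum.inr _ => True
    | Sum.inr _, Sum.inl _ => True
  symm := ⟨by rintro (a|a) (b|b) h <;> first | exact h.symm | trivial⟩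
  loopless := ⟨by rintro (a|a) h; exact G.irrefl h; exact H.irrefl h⟩

open Matrix Polynomial SimpleGraph

section Helpers

variable {I : Type} [Fintype I] [DecidableEq I]

lemma my_charmatrix_eq (A : Matrix I I ℝ) :
    charmatrix A = Matrix.scalar I (X : ℝ[X]) - A.map C := by
  ext i j
  by_cases h : i = j <;>
    simp [charmatrix_apply, Matrix.scalar_apply, diagonal_apply, h]

lemma my_charpoly_conj (S S' A : Matrix I I ℝ)
    (h1 : S * S' = 1) :
    (S * A * S').charpoly = A.charpoly := by
  have hcomm := Matrix.scalar_commute (n := I) (X : ℝ[X])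
    (fun r' => Commute.all _ _) (S'.map C)
  have hc : charmatrix (S * A * S') = S.map C * charmatrix A * S'.map C := by
    rw [my_charmatrix_eq, my_charmatrix_eq]
    rw [mul_sub, sub_mul]
    congr 1
    · rw [mul_assoc, hcomm.eq, ← mul_assoc, ← Matrix.map_mul, h1]
      simp
    · rw [← Matrix.map_mul, ← Matrix.map_mul]
  rw [Matrix.charpoly, hc, det_mul, det_mul, Matrix.charpoly]
  rw [mul_right_comm, ← det_mul, ← Matrix.map_mul, h1]
  simp

end Helpers

section FinHelpers

variable {k : ℕ}

lemma my_charpoly_diagonal (d : Fin k → ℝ) :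
    (diagonal d).charpoly = ∏ i : Fin k, (X - C (d i)) := by
  have h : (diagonal d).BlockTriangular id := blockTriangular_diagonal d
  rw [charpoly_of_upperTriangular _ h]
  simp [diagonal_apply_eq]

lemma my_herm_charpoly (A : Matrix (Fin k) (Fin k) ℝ) (hA : A.IsHermitian) :
    A.charpoly = ∏ i : Fin k, (X - C (hA.eigenvalues i)) := by
  have hs : star (hA.eigenvectorUnitary : Matrix (Fin k) (Fin k) ℝ) * A *
      (hA.eigenvectorUnitary : Matrix (Fin k) (Fin k) ℝ) = diagonal (RCLike.ofReal ∘ hA.eigenvalues) := by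
    have := hA.conjStarAlgAut_star_eigenvectorUnitary
    simp only [Unitary.conjStarAlgAut_star_apply, Unitary.coe_star] at this
    exact this
  have hu1 : (star (hA.eigenvectorUnitary : Matrix (Fin k) (Fin k) ℝ)) *
      (hA.eigenvectorUnitary : Matrix (Fin k) (Fin k) ℝ) = 1 :=
    Matrix.mem_unitaryGroup_iff'.mp (hA.eigenvectorUnitary).2
  have := my_charpoly_conj _ _ A hu1
  rw [hs] at this
  rw [← this, my_charpoly_diagonal]
  refine Finset.prod_congr rfl fun i _ => ?_
  norm_num [RCLike.ofReal]

lemma my_herm_roots (A : Matrix (Fin k) (Fin k) ℝ) (hA : A.IsHermitian) :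
    A.charpoly.roots = Multiset.map hA.eigenvalues Finset.univ.val := by
  rw [my_herm_charpoly A hA]
  rw [Finset.prod_eq_multiset_prod]
  have : Multiset.map (fun i => X - C (hA.eigenvalues i)) Finset.univ.val
      = Multiset.map (fun a => X - C a) (Multiset.map hA.eigenvalues Finset.univ.val) := by
    rw [Multiset.map_map]; rfl
  rw [this]
  exact roots_multiset_prod_X_sub_C _

lemma my_exists_perm (f g : Fin k → ℝ)
    (h : Multiset.map f Finset.univ.val = Multiset.map g Finset.univ.val) :
    ∃ σ : Equiv.Perm (Fin k), f ∘ σ = g := by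
  have hof : ∀ (f : Fin k → ℝ), (Multiset.map f Finset.univ.val : Multiset ℝ)
      = ↑(List.ofFn f) := by
    intro f
    rw [List.ofFn_eq_map]
    rfl
  have hperm : (List.ofFn (f ∘ Tuple.sort f)).Perm (List.ofFn (g ∘ Tuple.sort g)) := by
    have p1 := Equiv.Perm.ofFn_comp_perm (Tuple.sort f) f
    have p2 := Equiv.Perm.ofFn_comp_perm (Tuple.sort g) g
    have p3 : (List.ofFn f).Perm (List.ofFn g) := by
      rw [← Multiset.coe_eq_coe, ← hof, ← hof, h]
    exact (p1.trans p3).trans p2.symm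
  have hsorted : List.ofFn (f ∘ Tuple.sort f) = List.ofFn (g ∘ Tuple.sort g) :=
    List.Perm.eq_of_sortedLE (Tuple.monotone_sort f).sortedLE_ofFn
      (Tuple.monotone_sort g).sortedLE_ofFn hperm
  have heq : f ∘ Tuple.sort f = g ∘ Tuple.sort g := List.ofFn_injective hsorted
  refine ⟨(Tuple.sort g).symm.trans (Tuple.sort f), ?_⟩
  funext i
  have := congrFun heq ((Tuple.sort g).symm i)
  simpa using this

lemma my_mulVec_inner (Q : Matrix (Fin k) (Fin k) ℝ) (hQ : Qᵀ * Q = 1)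
    (x y : Fin k → ℝ) : (Q *ᵥ x) ⬝ᵥ (Q *ᵥ y) = x ⬝ᵥ y := by
  rw [dotProduct_mulVec, ← vecMul_transpose, vecMul_vecMul, hQ, vecMul_one]

lemma my_vecMulVec_sq (w : Fin k → ℝ) :
    (vecMulVec w w) * (vecMulVec w w) = (w ⬝ᵥ w) • vecMulVec w w := by
  ext i j
  simp only [mul_apply, vecMulVec_apply, Matrix.smul_apply, smul_eq_mul, dotProduct]
  rw [Finset.sum_mul]
  congr 1; funext x; ring

lemma my_vecMulVec_mulVec (w u : Fin k → ℝ) :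
    (vecMulVec w w) *ᵥ u = (w ⬝ᵥ u) • w := by
  ext i
  simp only [mulVec, dotProduct, vecMulVec_apply, Pi.smul_apply, smul_eq_mul]
  rw [Finset.sum_mul]
  congr 1; funext x; ring

lemma my_mul_vecMulVec (L : Matrix (Fin k) (Fin k) ℝ) (w : Fin k → ℝ)
    (h : L *ᵥ w = 0) : L * vecMulVec w w = 0 := by
  ext i j
  simp only [mul_apply, vecMulVec_apply, Matrix.zero_apply]
  have := congrFun h i
  simp only [mulVec, dotProduct, Pi.zero_apply] at this
  calc ∑ x, L i x * (w x * w j) = (∑ x, L i x * w x) * w j := by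
        rw [Finset.sum_mul]; congr 1; funext x; ring
    _ = 0 := by rw [this, zero_mul]

lemma my_vecMulVec_transpose (w : Fin k → ℝ) :
    (vecMulVec w w)ᵀ = vecMulVec w w := by
  ext i j; simp [vecMulVec_apply, transpose_apply, mul_comm]

variable (σ : Equiv.Perm (Fin k))

lemma pm_mul (M : Matrix (Fin k) (Fin k) ℝ) :
    (1 : Matrix (Fin k) (Fin k) ℝ).submatrix σ id * M = M.submatrix σ id := by
  have := one_submatrix_mul (α := ℝ) (e₁ := (σ : Fin k → Fin k)) (e₂ := Equiv.refl (Fin k)) M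
  simpa using this

lemma pm_mul' (M : Matrix (Fin k) (Fin k) ℝ) :
    (1 : Matrix (Fin k) (Fin k) ℝ).submatrix id σ * M = M.submatrix σ.symm id := by
  have := one_submatrix_mul (α := ℝ) (e₁ := (id : Fin k → Fin k)) (e₂ := σ) M
  simpa using this

lemma mul_pm (M : Matrix (Fin k) (Fin k) ℝ) :
    M * (1 : Matrix (Fin k) (Fin k) ℝ).submatrix id σ = M.submatrix id σ := by
  have := mul_submatrix_one (α := ℝ) (e₁ := Equiv.refl (Fin k)) (e₂ := (σ : Fin k → Fin k)) M
  simpa using this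

lemma pm_t : ((1 : Matrix (Fin k) (Fin k) ℝ).submatrix σ id)ᵀ
    = (1 : Matrix (Fin k) (Fin k) ℝ).submatrix id σ := by
  rw [transpose_submatrix, transpose_one]

lemma pm_orth1 : (1 : Matrix (Fin k) (Fin k) ℝ).submatrix σ id
    * ((1 : Matrix (Fin k) (Fin k) ℝ).submatrix σ id)ᵀ = 1 := by
  rw [pm_t, mul_pm, submatrix_submatrix]
  simp

lemma pm_orth2 : ((1 : Matrix (Fin k) (Fin k) ℝ).submatrix σ id)ᵀ
    * (1 : Matrix (Fin k) (Fin k) ℝ).submatrix σ id = 1 := by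
  rw [pm_t, pm_mul', submatrix_submatrix]
  simp

lemma pm_diag (d : Fin k → ℝ) :
    (1 : Matrix (Fin k) (Fin k) ℝ).submatrix σ id * diagonal d
      * ((1 : Matrix (Fin k) (Fin k) ℝ).submatrix σ id)ᵀ = diagonal (d ∘ σ) := by
  rw [pm_t, pm_mul, mul_pm, submatrix_submatrix]
  simp only [Function.comp_id, Function.id_comp]
  rw [submatrix_diagonal_equiv]

lemma my_exists_orth (L₁ L₂ : Matrix (Fin k) (Fin k) ℝ)
    (h₁ : L₁.IsHermitian) (h₂ : L₂.IsHermitian)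
    (hroots : L₁.charpoly.roots = L₂.charpoly.roots)
    (hone₁ : L₁ *ᵥ (fun _ => (1:ℝ)) = 0) (hone₂ : L₂ *ᵥ (fun _ => (1:ℝ)) = 0) :
    ∃ Q : Matrix (Fin k) (Fin k) ℝ, Q * Qᵀ = 1 ∧ Qᵀ * Q = 1 ∧
      Q * L₁ * Qᵀ = L₂ ∧ Q *ᵥ (fun _ => (1:ℝ)) = (fun _ => (1:ℝ)) := by
  classical
  have hmul : Multiset.map h₁.eigenvalues Finset.univ.val
      = Multiset.map h₂.eigenvalues Finset.univ.val := by
    rw [← my_herm_roots L₁ h₁, ← my_herm_roots L₂ h₂, hroots]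
  obtain ⟨σ, hσ⟩ := my_exists_perm _ _ hmul
  set U₁ : Matrix (Fin k) (Fin k) ℝ := (h₁.eigenvectorUnitary : Matrix (Fin k) (Fin k) ℝ) with hU₁
  set U₂ : Matrix (Fin k) (Fin k) ℝ := (h₂.eigenvectorUnitary : Matrix (Fin k) (Fin k) ℝ) with hU₂
  have hstar : ∀ M : Matrix (Fin k) (Fin k) ℝ, star M = Mᵀ := fun M => by
    rw [Matrix.star_eq_conjTranspose, conjTranspose_eq_transpose_of_trivial]
  have hU₁o : U₁ᵀ * U₁ = 1 := by
    rw [← hstar]; exact Matrix.mem_unitaryGroup_iff'.mp h₁.eigenvectorUnitary.2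
  have hU₁o' : U₁ * U₁ᵀ = 1 := by
    rw [← hstar]; exact Matrix.mem_unitaryGroup_iff.mp h₁.eigenvectorUnitary.2
  have hU₂o : U₂ᵀ * U₂ = 1 := by
    rw [← hstar]; exact Matrix.mem_unitaryGroup_iff'.mp h₂.eigenvectorUnitary.2
  have hU₂o' : U₂ * U₂ᵀ = 1 := by
    rw [← hstar]; exact Matrix.mem_unitaryGroup_iff.mp h₂.eigenvectorUnitary.2
  have hspec₁ : L₁ = U₁ * diagonal h₁.eigenvalues * U₁ᵀ := by
    have := h₁.spectral_theorem
    simp only [Unitary.conjStarAlgAut_apply, Unitary.coe_star, hstar] at this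
    convert this using 2
    all_goals rfl
  have hspec₂ : L₂ = U₂ * diagonal h₂.eigenvalues * U₂ᵀ := by
    have := h₂.spectral_theorem
    simp only [Unitary.conjStarAlgAut_apply, Unitary.coe_star, hstar] at this
    convert this using 2
    all_goals rfl
  set P : Matrix (Fin k) (Fin k) ℝ := (1 : Matrix (Fin k) (Fin k) ℝ).submatrix σ id with hP
  have hPP : P * Pᵀ = 1 := pm_orth1 σ
  have hPP' : Pᵀ * P = 1 := pm_orth2 σ
  have hPD : P * diagonal h₁.eigenvalues * Pᵀ = diagonal h₂.eigenvalues := by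
    rw [hP, pm_diag, hσ]
  set Q₀ : Matrix (Fin k) (Fin k) ℝ := U₂ * P * U₁ᵀ with hQ₀
  have hQ₀o : Q₀ * Q₀ᵀ = 1 := by
    rw [hQ₀, transpose_mul, transpose_mul, transpose_transpose]
    calc U₂ * P * U₁ᵀ * (U₁ * (Pᵀ * U₂ᵀ)) = U₂ * (P * (U₁ᵀ * U₁) * (Pᵀ * U₂ᵀ)) := by
          noncomm_ring
      _ = U₂ * (P * Pᵀ) * U₂ᵀ := by rw [hU₁o, mul_one]; noncomm_ring
      _ = 1 := by rw [hPP, mul_one, hU₂o']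
  have hQ₀o' : Q₀ᵀ * Q₀ = 1 := by
    rw [hQ₀, transpose_mul, transpose_mul, transpose_transpose]
    calc U₁ * (Pᵀ * U₂ᵀ) * (U₂ * P * U₁ᵀ)
        = U₁ * (Pᵀ * (U₂ᵀ * U₂) * P) * U₁ᵀ := by noncomm_ring
      _ = 1 := by rw [hU₂o, mul_one, hPP', mul_one, hU₁o']
  have hQ₀L : Q₀ * L₁ * Q₀ᵀ = L₂ := by
    rw [hQ₀, hspec₁, hspec₂, transpose_mul, transpose_mul, transpose_transpose]
    calc U₂ * P * U₁ᵀ * (U₁ * diagonal h₁.eigenvalues * U₁ᵀ) * (U₁ * (Pᵀ * U₂ᵀ))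
        = U₂ * (P * (U₁ᵀ * U₁) * diagonal h₁.eigenvalues * (U₁ᵀ * U₁) * Pᵀ) * U₂ᵀ := by
          noncomm_ring
      _ = U₂ * (P * diagonal h₁.eigenvalues * Pᵀ) * U₂ᵀ := by
          rw [hU₁o, mul_one, mul_one]
      _ = U₂ * diagonal h₂.eigenvalues * U₂ᵀ := by rw [hPD]
  set one : Fin k → ℝ := fun _ => 1 with hone
  set u : Fin k → ℝ := Q₀ *ᵥ one with hu
  set w : Fin k → ℝ := u - one with hw
  have hL₂u : L₂ *ᵥ u = 0 := by
    rw [hu, mulVec_mulVec, ← hQ₀L, mul_assoc (Q₀ * L₁) Q₀ᵀ Q₀, hQ₀o', mul_one,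
      ← mulVec_mulVec, hone₁, mulVec_zero]
  have hL₂w : L₂ *ᵥ w = 0 := by
    rw [hw, mulVec_sub, hL₂u, hone₂, sub_zero]
  by_cases hw0 : w = 0
  · refine ⟨Q₀, hQ₀o, hQ₀o', hQ₀L, ?_⟩
    have : u = one := by rwa [hw, sub_eq_zero] at hw0
    rw [← hu, this]
  · set c : ℝ := w ⬝ᵥ w with hc
    have hcpos : c ≠ 0 := fun hcc => hw0 (dotProduct_self_eq_zero.mp hcc)
    have huu : u ⬝ᵥ u = (k : ℝ) := by
      rw [hu, my_mulVec_inner Q₀ hQ₀o' one one]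
      simp [hone, dotProduct]
    have honeone : one ⬝ᵥ one = (k : ℝ) := by simp [hone, dotProduct]
    have hwu : c = 2 * (w ⬝ᵥ u) := by
      have h1 : w ⬝ᵥ u = u ⬝ᵥ u - one ⬝ᵥ u := by
        rw [hw, sub_dotProduct]
      have h2 : c = u ⬝ᵥ u - one ⬝ᵥ u - (u ⬝ᵥ one - one ⬝ᵥ one) := by
        rw [hc, hw, sub_dotProduct, dotProduct_sub, dotProduct_sub, dotProduct_comm u one]
      rw [h2, h1, dotProduct_comm u one, huu, honeone]
      ring
    set W : Matrix (Fin k) (Fin k) ℝ := vecMulVec w w with hW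
    set R : Matrix (Fin k) (Fin k) ℝ := 1 - (2/c) • W with hR
    have hRt : Rᵀ = R := by
      rw [hR, transpose_sub, transpose_smul, transpose_one, hW, my_vecMulVec_transpose]
    have hRR : R * R = 1 := by
      rw [hR]
      have hexp : ((1:Matrix (Fin k) (Fin k) ℝ) - (2/c) • W) * (1 - (2/c) • W)
          = 1 - (2/c) • W - (2/c) • W + ((2/c) * (2/c)) • (W * W) := by
        rw [sub_mul, mul_sub, mul_sub, one_mul, mul_one, smul_mul_smul_comm]
        simp only [Matrix.one_mul]
        abel
      rw [hexp, hW, my_vecMulVec_sq, ← hc, ← hW, smul_smul]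
      have h4 : 2/c * (2/c) * c = 2/c + 2/c := by field_simp; ring
      rw [h4, add_smul]
      abel
    have hRL : R * L₂ * R = L₂ := by
      have hLW : L₂ * W = 0 := my_mul_vecMulVec L₂ w hL₂w
      have h' : L₂ᵀ = L₂ := by rw [← hstar]; exact h₂
      have hWL : W * L₂ = 0 := by
        have ht : (L₂ * W)ᵀ = Wᵀ * L₂ᵀ := transpose_mul _ _
        rw [hLW, transpose_zero, hW, my_vecMulVec_transpose, ← hW, h'] at ht
        exact ht.symm
      have e1 : ((1:Matrix (Fin k) (Fin k) ℝ) - (2/c) • W) * L₂ = L₂ := by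
        rw [sub_mul, one_mul, smul_mul_assoc, hWL, smul_zero, sub_zero]
      have e2 : L₂ * ((1:Matrix (Fin k) (Fin k) ℝ) - (2/c) • W) = L₂ := by
        rw [mul_sub, mul_one, mul_smul_comm, hLW, smul_zero, sub_zero]
      rw [hR, e1, e2]
    have hRu : R *ᵥ u = one := by
      rw [hR, sub_mulVec, one_mulVec, smul_mulVec, hW, my_vecMulVec_mulVec]
      have hwu2 : w ⬝ᵥ u = c / 2 := by rw [hwu]; ring
      rw [hwu2, smul_smul]
      have h2 : 2 / c * (c / 2) = 1 := by field_simp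
      rw [h2, one_smul]
      funext i
      simp [hw]
    refine ⟨R * Q₀, ?_, ?_, ?_, ?_⟩
    · rw [transpose_mul, hRt, ← mul_assoc, mul_assoc R Q₀, hQ₀o, mul_one, hRR]
    · rw [transpose_mul, hRt]
      calc Q₀ᵀ * R * (R * Q₀) = Q₀ᵀ * (R * R) * Q₀ := by noncomm_ring
        _ = 1 := by rw [hRR, mul_one, hQ₀o']
    · rw [transpose_mul, hRt]
      calc R * Q₀ * L₁ * (Q₀ᵀ * R) = R * (Q₀ * L₁ * Q₀ᵀ) * R := by noncomm_ring
        _ = L₂ := by rw [hQ₀L, hRL]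
    · rw [← mulVec_mulVec, ← hu, hRu]

end FinHelpers

lemma lap_isHermitian {V : Type} [Fintype V] [DecidableEq V] (G : SimpleGraph V)
    [DecidableRel G.Adj] : (G.lapMatrix ℝ).IsHermitian := by
  show (G.lapMatrix ℝ)ᴴ = G.lapMatrix ℝ
  rw [conjTranspose_eq_transpose_of_trivial]
  exact G.isSymm_lapMatrix (R := ℝ)

lemma lapMatrix_graphJoin {n m : ℕ} (G' : SimpleGraph (Fin m)) (G : SimpleGraph (Fin n)) :
    (graphJoin G' G).lapMatrix ℝ =
      fromBlocks (G'.lapMatrix ℝ + (n : ℝ) • (1 : Matrix (Fin m) (Fin m) ℝ))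
        (-(Matrix.of fun _ _ => (1:ℝ)))
        (-(Matrix.of fun _ _ => (1:ℝ)))
        (G.lapMatrix ℝ + (m : ℝ) • (1 : Matrix (Fin n) (Fin n) ℝ)) := by
  have hdegl : ∀ a : Fin m, ((graphJoin G' G).degree (Sum.inl a) : ℝ) = G'.degree a + n := by
    intro a
    rw [degree_eq_sum_if_adj, Fintype.sum_sum_type]
    rw [degree_eq_sum_if_adj (R := ℝ)]
    have h1 : ∀ b : Fin m, ((graphJoin G' G).Adj (Sum.inl a) (Sum.inl b)) = G'.Adj a b :=
      fun _ => rfl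
    have h2 : ∀ c : Fin n, ((graphJoin G' G).Adj (Sum.inl a) (Sum.inr c)) = True := fun _ => rfl
    simp only [h1, h2, if_true]
    simp
  have hdegr : ∀ a : Fin n, ((graphJoin G' G).degree (Sum.inr a) : ℝ) = G.degree a + m := by
    intro a
    rw [degree_eq_sum_if_adj, Fintype.sum_sum_type]
    rw [degree_eq_sum_if_adj (R := ℝ)]
    have h1 : ∀ b : Fin n, ((graphJoin G' G).Adj (Sum.inr a) (Sum.inr b)) = G.Adj a b :=
      fun _ => rfl
    have h2 : ∀ c : Fin m, ((graphJoin G' G).Adj (Sum.inr a) (Sum.inl c)) = True := fun _ => rfl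
    simp only [h1, h2, if_true]
    simp [add_comm]
  ext (i|i) (j|j)
  · simp only [lapMatrix, degMatrix, Matrix.sub_apply, diagonal_apply, adjMatrix_apply,
      fromBlocks_apply₁₁, Matrix.add_apply, Matrix.smul_apply, one_apply, smul_eq_mul]
    by_cases hij : i = j
    · subst hij
      simp only [if_pos rfl, Sum.inl.injEq, hdegl i]
      have hnl : ¬ (graphJoin G' G).Adj (Sum.inl i) (Sum.inl i) := (graphJoin G' G).loopless.irrefl _
      rw [if_neg hnl]
      simp [G'.loopless.irrefl i]
    · have h1 : ((graphJoin G' G).Adj (Sum.inl i) (Sum.inl j)) = G'.Adj i j := rfl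
      have hne : (Sum.inl i : Fin m ⊕ Fin n) ≠ Sum.inl j := by simp [hij]
      rw [if_neg hne, if_neg hij, if_neg hij, h1]
      ring
  · have h2 : ((graphJoin G' G).Adj (Sum.inl i) (Sum.inr j)) = True := rfl
    simp [lapMatrix, degMatrix, diagonal_apply, h2]
  · have h2 : ((graphJoin G' G).Adj (Sum.inr i) (Sum.inl j)) = True := rfl
    simp [lapMatrix, degMatrix, diagonal_apply, h2]
  · simp only [lapMatrix, degMatrix, Matrix.sub_apply, diagonal_apply, adjMatrix_apply,
      fromBlocks_apply₂₂, Matrix.add_apply, Matrix.smul_apply, one_apply, smul_eq_mul]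
    by_cases hij : i = j
    · subst hij
      simp only [if_pos rfl, Sum.inr.injEq, hdegr i]
      have hnl : ¬ (graphJoin G' G).Adj (Sum.inr i) (Sum.inr i) := (graphJoin G' G).loopless.irrefl _
      rw [if_neg hnl]
      simp [G.loopless.irrefl i]
    · have h1 : ((graphJoin G' G).Adj (Sum.inr i) (Sum.inr j)) = G.Adj i j := rfl
      have hne : (Sum.inr i : Fin m ⊕ Fin n) ≠ Sum.inr j := by simp [hij]
      rw [if_neg hne, if_neg hij, if_neg hij, h1]
      ring

/-- Joining a fixed graph to L-cospectral graphs yields L-cospectral graphs. -/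
theorem join_preserves_L_cospectral {n m : ℕ}
    (G₁ G₂ : SimpleGraph (Fin n)) (G' : SimpleGraph (Fin m))
    (h : ((G₁.lapMatrix ℝ).charpoly.roots = (G₂.lapMatrix ℝ).charpoly.roots)) :
    ((graphJoin G' G₁).lapMatrix ℝ).charpoly.roots =
      ((graphJoin G' G₂).lapMatrix ℝ).charpoly.roots := by
  obtain ⟨Q, hQo, hQo', hQL, hQ1⟩ := my_exists_orth (G₁.lapMatrix ℝ) (G₂.lapMatrix ℝ)
    (lap_isHermitian G₁) (lap_isHermitian G₂) h
    (G₁.lapMatrix_mulVec_const_eq_zero) (G₂.lapMatrix_mulVec_const_eq_zero)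
  set S : Matrix (Fin m ⊕ Fin n) (Fin m ⊕ Fin n) ℝ :=
    fromBlocks 1 0 0 Q with hS
  have hSt : Sᵀ = fromBlocks 1 0 0 Qᵀ := by
    rw [hS, fromBlocks_transpose, transpose_one, transpose_zero, transpose_zero]
  have hSo : S * Sᵀ = 1 := by
    rw [hS, hSt, fromBlocks_multiply]
    simp [hQo, fromBlocks_one]
  -- the block identities
  have hJQ : (Matrix.of fun _ _ => (1:ℝ) : Matrix (Fin m) (Fin n) ℝ) * Qᵀ = (Matrix.of fun (_ : Fin m) (_ : Fin n) => (1:ℝ)) := by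
    ext a v
    simp only [mul_apply, Matrix.of_apply, transpose_apply, one_mul]
    have := congrFun hQ1 v
    simpa [mulVec, dotProduct] using this
  have hQJ : Q * (Matrix.of fun _ _ => (1:ℝ) : Matrix (Fin n) (Fin m) ℝ) = (Matrix.of fun (_ : Fin n) (_ : Fin m) => (1:ℝ)) := by
    ext v a
    simp only [mul_apply, Matrix.of_apply, mul_one]
    have := congrFun hQ1 v
    simpa [mulVec, dotProduct] using this
  have hQblock : Q * (G₁.lapMatrix ℝ + (m : ℝ) • (1 : Matrix (Fin n) (Fin n) ℝ)) * Qᵀ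
      = G₂.lapMatrix ℝ + (m : ℝ) • (1 : Matrix (Fin n) (Fin n) ℝ) := by
    rw [mul_add, add_mul, hQL]
    congr 1
    rw [mul_smul_comm, smul_mul_assoc, mul_one, hQo]
  have hconj : S * ((graphJoin G' G₁).lapMatrix ℝ) * Sᵀ = (graphJoin G' G₂).lapMatrix ℝ := by
    rw [lapMatrix_graphJoin, lapMatrix_graphJoin, hS, hSt, fromBlocks_multiply,
      fromBlocks_multiply]
    simp only [Matrix.one_mul, Matrix.mul_one, Matrix.zero_mul, Matrix.mul_zero,
      Matrix.neg_mul, Matrix.mul_neg, add_zero, zero_add, neg_zero, hJQ, hQJ]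
    rw [hQblock]
  have := my_charpoly_conj S Sᵀ ((graphJoin G' G₁).lapMatrix ℝ) hSo
  rw [hconj] at this
  rw [← this]
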